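/- Let G be a nontrivial group and fix a central involution s of G. A finite connected simple graph L with at least one edge has the property that (L,ζ) is a gain-line graph for every gain function ζ ∈ G(L) if and only if L is isomorphic to a path graph or to a cycle graph. -/

import Mathlib

open SimpleGraph

/-- `ψ` is a gain function on `Γ`: on adjacent ordered pairs, reversing the
orientation inverts the gain. -/
def IsGainFun {V G : Type} [Group G] (Γ : SimpleGraph V) (ψ : V → V → G) : Prop :=
  ∀ ⦃u v : V⦄, Γ.Adj u v → ψ v u = (ψ u v)⁻¹

/-- Two gain functions on `Γ` are switching equivalent. -/
def SwitchingEquiv {V G : Type} [Group G] (Γ : SimpleGraph V) (ψ₁ ψ₂ : V → V → G) : Prop :=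
  ∃ f : V → G, ∀ ⦃u v : V⦄, Γ.Adj u v → ψ₂ u v = (f u)⁻¹ * ψ₁ u v * f v

/-- A `G`-phase of `Γ`: a choice of a group element for every incident
(vertex, edge) pair (the non-incident entries of the phase matrix are `0`,
so they carry no data). -/
def GPhase {V : Type} (Γ : SimpleGraph V) (G : Type) : Type :=
  ∀ (v : V) (e : Γ.edgeSet), v ∈ (e : Sym2 V) → G

/-- `Ψ(H) = ψ`: the gain function associated with the phase `H` (with parameter `s₁`)
is `ψ`, i.e. `ψ(u,v) = s₁ · H(u,e) · H(v,e)⁻¹` for `e = {u,v}`. -/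
def PsiEq {V G : Type} [Group G] {Γ : SimpleGraph V} (s₁ : G) (H : GPhase Γ G)
    (ψ : V → V → G) : Prop :=
  ∀ ⦃u v : V⦄ (h : Γ.Adj u v),
    ψ u v = s₁ * H u ⟨s(u, v), h⟩ (Sym2.mem_mk_left u v)
      * (H v ⟨s(u, v), h⟩ (Sym2.mem_mk_right u v))⁻¹

/-- `Ψ_L(H) = ζ`: the gain function on the line graph associated with the phase `H`
(with parameter `s`) is `ζ`, i.e. `ζ(e_p,e_q) = s · H(w,e_p)⁻¹ · H(w,e_q)` whenever
`w` is a common endpoint of the distinct edges `e_p, e_q`. -/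
def PsiLEq {V G : Type} [Group G] {Γ : SimpleGraph V} (s : G) (H : GPhase Γ G)
    (ζ : Γ.edgeSet → Γ.edgeSet → G) : Prop :=
  ∀ (p q : Γ.edgeSet) (w : V) (hp : w ∈ (p : Sym2 V)) (hq : w ∈ (q : Sym2 V)), p ≠ q →
    ζ p q = s * (H w p hp)⁻¹ * H w q hq

/-- `(L, ζ)` is a gain-line graph (with parameter `s`): there are a graph `Γ`
with `L = L(Γ)` (up to isomorphism) and a `G`-phase `H` of `Γ` with `Ψ_L(H) = ζ`. -/
def IsGainLine {VL G : Type} [Group G] (s : G) (L : SimpleGraph VL) (ζ : VL → VL → G) : Prop :=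
  ∃ (V' : Type) (Γ : SimpleGraph V') (φ : L ≃g Γ.lineGraph) (H : GPhase Γ G),
    PsiLEq s H fun p q => ζ (φ.symm p) (φ.symm q)

def NbrLe2 {V : Type} (Γ : SimpleGraph V) : Prop :=
  ∀ ⦃v a b c : V⦄, Γ.Adj v a → Γ.Adj v b → Γ.Adj v c → a = b ∨ a = c ∨ b = c


lemma nbrLe2_path (n : ℕ) : NbrLe2 (pathGraph n) := by
  intro v a b c ha hb hc
  rw [pathGraph_adj] at ha hb hc
  have h2 : a = b ∨ a = c ∨ b = c ↔ (a:ℕ) = b ∨ (a:ℕ) = c ∨ (b:ℕ) = c := by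
    simp [Fin.ext_iff]
  rw [h2]
  omega


lemma nbrLe2_cycle (n : ℕ) : NbrLe2 (cycleGraph (n+2)) := by
  intro v a b c ha hb hc
  have key : ∀ x : Fin (n+2), (cycleGraph (n+2)).Adj v x → x = v - 1 ∨ x = v + 1 := by
    intro x hx
    have : x ∈ (cycleGraph (n+2)).neighborSet v := hx
    rw [cycleGraph_neighborSet] at this
    simpa using this
  rcases key a ha with h1 | h1 <;> rcases key b hb with h2 | h2 <;> rcases key c hc with h3 | h3 <;>
    simp [h1, h2, h3]

/-- at most two edges through each vertex -/
lemma edge_le2_of_nbrLe2 {V : Type} {Γ : SimpleGraph V} (hΓ : NbrLe2 Γ)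
    {w : V} {p q r : Γ.edgeSet} (hp : w ∈ (p : Sym2 V)) (hq : w ∈ (q : Sym2 V))
    (hr : w ∈ (r : Sym2 V)) : p = q ∨ p = r ∨ q = r := by
  have op := Sym2.other_spec hp
  have oq := Sym2.other_spec hq
  have orr := Sym2.other_spec hr
  have hap : Γ.Adj w (Sym2.Mem.other hp) := by
    rw [← SimpleGraph.mem_edgeSet, op]; exact p.2
  have haq : Γ.Adj w (Sym2.Mem.other hq) := by
    rw [← SimpleGraph.mem_edgeSet, oq]; exact q.2
  have har : Γ.Adj w (Sym2.Mem.other hr) := by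
    rw [← SimpleGraph.mem_edgeSet, orr]; exact r.2
  rcases hΓ hap haq har with h | h | h
  · left; apply Subtype.ext; rw [← op, ← oq, h]
  · right; left; apply Subtype.ext; rw [← op, ← orr, h]
  · right; right; apply Subtype.ext; rw [← oq, ← orr, h]

lemma realize {VL V' G : Type} [Group G] {s : G} (hs : s*s=1) (hsc : ∀ g : G, s*g=g*s)
    (L : SimpleGraph VL) (Γ : SimpleGraph V') (hΓ : NbrLe2 Γ) (φ : L ≃g Γ.lineGraph)
    (ζ : VL → VL → G) (hζ : IsGainFun L ζ) : IsGainLine s L ζ := by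
  classical
  set ζ' : Γ.edgeSet → Γ.edgeSet → G := fun p q => ζ (φ.symm p) (φ.symm q) with hζ'
  -- antisymmetry of ζ' for distinct edges sharing a vertex
  have anti : ∀ (p q : Γ.edgeSet) (w : V'), w ∈ (p : Sym2 V') → w ∈ (q : Sym2 V') → p ≠ q →
      ζ' q p = (ζ' p q)⁻¹ := by
    intro p q w hp hq hne
    have hadj : Γ.lineGraph.Adj p q := by
      rw [lineGraph_adj_iff_exists]
      exact ⟨hne, w, hp, hq⟩
    have : L.Adj (φ.symm p) (φ.symm q) := by
      rw [← φ.map_rel_iff] at *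
      simpa using hadj
    exact hζ this
  refine ⟨V', Γ, φ, fun w e he =>
    if h : ∃ f : Γ.edgeSet, w ∈ (f : Sym2 V') then
      (if e = h.choose then 1 else s * ζ' h.choose e) else 1, ?_⟩
  intro p q w hp hq hne
  have hex : ∃ f : Γ.edgeSet, w ∈ (f : Sym2 V') := ⟨p, hp⟩
  set f := hex.choose with hf
  have hfw : w ∈ (f : Sym2 V') := hex.choose_spec
  simp only [dif_pos hex, ← hf]
  by_cases hpf : p = f
  · have hqf : q ≠ f := by rintro rfl; exact hne hpf
    rw [if_pos hpf, if_neg hqf, hpf]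
    rw [inv_one, mul_one, ← mul_assoc, hs, one_mul]
  · by_cases hqf : q = f
    · rw [if_neg hpf, if_pos hqf, hqf]
      rw [mul_one, mul_inv_rev, ← mul_assoc]
      have h1 : ζ' p f = (ζ' f p)⁻¹ := anti f p w hfw hp (fun h => hpf h.symm)
      show ζ' p f = _
      rw [h1, hsc, mul_assoc, mul_inv_cancel, mul_one]
    · exfalso
      rcases edge_le2_of_nbrLe2 hΓ hfw hp hq with h | h | h
      · exact hpf h.symm
      · exact hqf h.symm
      · exact hne h

noncomputable def pathLineIso (n : ℕ) : pathGraph n ≃g (pathGraph (n+1)).lineGraph := by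
  have hedge : ∀ i : Fin n, s(Fin.castSucc i, Fin.succ i) ∈ (pathGraph (n+1)).edgeSet := by
    intro i
    rw [mem_edgeSet, pathGraph_adj]
    left; simp
  let f : Fin n → (pathGraph (n+1)).edgeSet := fun i => ⟨s(Fin.castSucc i, Fin.succ i), hedge i⟩
  have hinj : Function.Injective f := by
    intro i j hij
    have := congrArg Subtype.val hij
    simp only [f] at this
    rw [Sym2.eq_iff] at this
    rcases this with ⟨h1, _⟩ | ⟨h1, h2⟩
    · exact Fin.castSucc_injective _ h1
    · have e1 : (i:ℕ) = (j:ℕ) + 1 := by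
        have := congrArg Fin.val h1; simpa using this
      have e2 : (i:ℕ) + 1 = (j:ℕ) := by
        have := congrArg Fin.val h2; simpa using this
      omega
  have hsurj : Function.Surjective f := by
    rintro ⟨e, he⟩
    induction e using Sym2.ind with
    | _ u v =>
      rw [mem_edgeSet, pathGraph_adj] at he
      rcases he with h | h
      · have hu : (u:ℕ) < n := by omega
        refine ⟨⟨u, hu⟩, Subtype.ext ?_⟩
        simp only [f]
        have : Fin.castSucc (⟨(u:ℕ), hu⟩ : Fin n) = u := by ext; simp
        rw [this]
        have : Fin.succ (⟨(u:ℕ), hu⟩ : Fin n) = v := by ext; simp [h]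
        rw [this]
      · have hv : (v:ℕ) < n := by omega
        refine ⟨⟨v, hv⟩, Subtype.ext ?_⟩
        simp only [f]
        have h1 : Fin.castSucc (⟨(v:ℕ), hv⟩ : Fin n) = v := by ext; simp
        have h2 : Fin.succ (⟨(v:ℕ), hv⟩ : Fin n) = u := by ext; simp [h]
        rw [h1, h2, Sym2.eq_swap]
  refine ⟨Equiv.ofBijective f ⟨hinj, hsurj⟩, ?_⟩
  intro i j
  show (pathGraph (n+1)).lineGraph.Adj (f i) (f j) ↔ (pathGraph n).Adj i j
  rw [lineGraph_adj_iff_exists, pathGraph_adj]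
  constructor
  · rintro ⟨hne, w, hwi, hwj⟩
    simp only [f] at hwi hwj
    rw [Sym2.mem_iff] at hwi hwj
    have hij : i ≠ j := fun h => hne (by rw [h])
    have hij' : (i:ℕ) ≠ (j:ℕ) := fun h => hij (Fin.ext h)
    rcases hwi with rfl | rfl <;> rcases hwj with h | h <;>
      (try exact absurd (by simpa [Fin.ext_iff] using h) hij') <;>
      · have := congrArg Fin.val h
        simp at this
        omega
  · intro h
    rcases h with h | h
    · refine ⟨fun he => ?_, Fin.succ i, by simp [f], by simp [f, Fin.ext_iff, h]⟩
      exact absurd (hinj he) (by intro hh; rw [hh] at h; omega)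
    · refine ⟨fun he => ?_, Fin.succ j, by simp [f, Fin.ext_iff, h], by simp [f]⟩
      exact absurd (hinj he) (by intro hh; rw [hh] at h; omega)

noncomputable def cycleLineIso (m : ℕ) : cycleGraph (m+3) ≃g (cycleGraph (m+3)).lineGraph := by
  have h1v : ((1 : Fin (m+3)) : ℕ) = 1 := by simp [Fin.val_one]
  have h2v : ((2 : Fin (m+3)) : ℕ) = 2 := by
    have : (2 : Fin (m+3)) = 1 + 1 := Fin.ext (by simp [Fin.val_add])
    rw [this, Fin.add_def, h1v]
    exact Nat.mod_eq_of_lt (by omega)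
  have hone : (1 : Fin (m+3)) ≠ 0 := by
    intro h; rw [Fin.ext_iff, h1v] at h; simp at h
  have h2 : (2 : Fin (m+3)) ≠ 0 := by
    intro h; rw [Fin.ext_iff, h2v] at h; simp at h
  have hsub : ∀ i : Fin (m+3), (i + 1 - i) = 1 := by intro i; rw [add_sub_cancel_left]
  have hedge : ∀ i : Fin (m+3), s(i, i+1) ∈ (cycleGraph (m+3)).edgeSet := by
    intro i
    rw [mem_edgeSet, cycleGraph_adj']
    right; rw [hsub, h1v]
  let f : Fin (m+3) → (cycleGraph (m+3)).edgeSet := fun i => ⟨s(i, i+1), hedge i⟩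
  have hinj : Function.Injective f := by
    intro i j hij
    have := congrArg Subtype.val hij
    simp only [f] at this
    rw [Sym2.eq_iff] at this
    rcases this with ⟨h1, _⟩ | ⟨h1, hb⟩
    · exact h1
    · exfalso
      apply h2
      have hii : i + 1 + 1 = i := by rw [hb, ← h1]
      have h3 : i + 2 = i + 0 := by rw [add_zero, show (2 : Fin (m+3)) = 1 + 1 from Fin.ext (by simp [Fin.val_add]), ← add_assoc]; exact hii
      exact add_left_cancel h3
  have hsurj : Function.Surjective f := by
    rintro ⟨e, he⟩
    induction e using Sym2.ind with
    | _ u v =>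
      rw [mem_edgeSet, cycleGraph_adj'] at he
      rcases he with h | h
      · have huv : u - v = 1 := by rw [Fin.ext_iff, h1v]; exact h
        refine ⟨v, Subtype.ext ?_⟩
        simp only [f]
        have : u = v + 1 := by rw [← huv]; abel
        rw [← this, Sym2.eq_swap]
      · have huv : v - u = 1 := by rw [Fin.ext_iff, h1v]; exact h
        refine ⟨u, Subtype.ext ?_⟩
        simp only [f]
        have : v = u + 1 := by rw [← huv]; abel
        rw [← this]
  refine ⟨Equiv.ofBijective f ⟨hinj, hsurj⟩, ?_⟩
  intro i j
  show (cycleGraph (m+3)).lineGraph.Adj (f i) (f j) ↔ (cycleGraph (m+3)).Adj i j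
  rw [lineGraph_adj_iff_exists, cycleGraph_adj']
  constructor
  · rintro ⟨hne, w, hwi, hwj⟩
    have hij : i ≠ j := fun h => hne (by rw [h])
    simp only [f] at hwi hwj
    rw [Sym2.mem_iff] at hwi hwj
    rcases hwi with rfl | rfl <;> rcases hwj with h | h
    · exact absurd h hij
    · left; rw [h, hsub, h1v]
    · right; rw [← h, hsub, h1v]
    · exact absurd (add_right_cancel h) hij
  · intro h
    have hne1 : ∀ k : Fin (m+3), k ≠ k + 1 := by
      intro k hk
      apply hone
      have : k + 0 = k + 1 := by rw [add_zero]; exact hk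
      exact (add_left_cancel this).symm
    rcases h with h | h
    · have huv : i - j = 1 := by rw [Fin.ext_iff, h1v]; exact h
      have hij : i = j + 1 := by rw [← huv]; abel
      refine ⟨fun he => ?_, i, by simp [f], by simp only [f]; rw [Sym2.mem_iff]; right; exact hij⟩
      have := hinj he
      rw [this] at hij
      exact hne1 j hij
    · have huv : j - i = 1 := by rw [Fin.ext_iff, h1v]; exact h
      have hij : j = i + 1 := by rw [← huv]; abel
      refine ⟨fun he => ?_, j, by simp only [f]; rw [Sym2.mem_iff]; right; exact hij, by simp [f]⟩
      have := hinj he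
      rw [← this] at hij
      exact hne1 i hij

/-- triangle of edges at a common vertex has gain product `s` -/
lemma triangle_prod {V' G : Type} [Group G] {s : G} (hs : s*s=1) (hsc : ∀ g : G, s*g=g*s)
    {Γ : SimpleGraph V'} {H : GPhase Γ G} {ζ' : Γ.edgeSet → Γ.edgeSet → G}
    (hH : PsiLEq s H ζ') {p q r : Γ.edgeSet} {w : V'}
    (hp : w ∈ (p : Sym2 V')) (hq : w ∈ (q : Sym2 V')) (hr : w ∈ (r : Sym2 V'))
    (hpq : p ≠ q) (hqr : q ≠ r) (hrp : r ≠ p) :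
    ζ' p q * ζ' q r * ζ' r p = s := by
  rw [hH p q w hp hq hpq, hH q r w hq hr hqr, hH r p w hr hp hrp]
  have swap : ∀ x g : G, x * (s * g) = s * (x * g) := by
    intro x g
    rw [← mul_assoc, ← hsc x, mul_assoc]
  have key : ∀ x y z : G, x * y * z = 1 → (s * x) * (s * y) * (s * z) = s := by
    intro x y z h
    calc (s * x) * (s * y) * (s * z)
        = (s * (x * (s * y))) * (s * z) := by rw [mul_assoc s x]
      _ = (s * (s * (x * y))) * (s * z) := by rw [swap x y]
      _ = s * ((s * (x * y)) * (s * z)) := by rw [mul_assoc]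
      _ = s * (s * ((x * y) * (s * z))) := by rw [mul_assoc s (x*y)]
      _ = s * (s * (s * ((x * y) * z))) := by rw [swap (x*y) z]
      _ = s * (s * (s * 1)) := by rw [h]
      _ = s := by rw [mul_one, hs, mul_one]
  have e1 : s * (H w p hp)⁻¹ * H w q hq = s * ((H w p hp)⁻¹ * H w q hq) := by group
  have e2 : s * (H w q hq)⁻¹ * H w r hr = s * ((H w q hq)⁻¹ * H w r hr) := by group
  have e3 : s * (H w r hr)⁻¹ * H w p hp = s * ((H w r hr)⁻¹ * H w p hp) := by group
  rw [e1, e2, e3]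
  apply key
  group

lemma nbrLe2_of_forall_gainLine {VL G : Type} [Group G] [Nontrivial G] (L : SimpleGraph VL)
    (s : G) (hs : s * s = 1) (hsc : ∀ g : G, s * g = g * s)
    (hyp : ∀ ζ : VL → VL → G, IsGainFun L ζ → IsGainLine s L ζ) : NbrLe2 L := by
  classical
  intro v a b c hva hvb hvc
  by_contra hcon
  push_neg at hcon
  obtain ⟨hab, hac, hbc⟩ := hcon
  -- pick t ≠ s
  obtain ⟨t, ht⟩ : ∃ t : G, t ≠ s := by
    by_cases h1 : s = 1
    · obtain ⟨g, hg⟩ := exists_ne (1 : G)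
      exact ⟨g, by rw [h1]; exact hg⟩
    · exact ⟨1, fun h => h1 h.symm⟩
  have hsinv : s⁻¹ = s := by
    rw [← mul_one s⁻¹, ← hs, ← mul_assoc, inv_mul_cancel, one_mul]
  have htinv : t⁻¹ ≠ s := by
    intro h
    apply ht
    rw [← inv_inv t, h, hsinv]
  -- distinctness of v from a b c
  have hvna : v ≠ a := hva.ne
  have hvnb : v ≠ b := hvb.ne
  have hvnc : v ≠ c := hvc.ne
  set ζ : VL → VL → G := fun u w =>
    if (u = a ∧ w = b) ∨ (u = a ∧ w = c) ∨ (u = b ∧ w = c) then t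
    else if (w = a ∧ u = b) ∨ (w = a ∧ u = c) ∨ (w = b ∧ u = c) then t⁻¹
    else 1 with hζ
  have hgain : IsGainFun L ζ := by
    intro u w _
    simp only [hζ]
    split_ifs with h1 h2 h3 h4 <;> first | simp | (exfalso; rcases h1 with ⟨rfl,rfl⟩|⟨rfl,rfl⟩|⟨rfl,rfl⟩ <;> tauto)
  have hab' : b ≠ a := fun h => hab h.symm
  have hac' : c ≠ a := fun h => hac h.symm
  have hbc' : c ≠ b := fun h => hbc h.symm
  have hanv : a ≠ v := fun h => hvna h.symm
  have hbnv : b ≠ v := fun h => hvnb h.symm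
  have hcnv : c ≠ v := fun h => hvnc h.symm
  have zab : ζ a b = t := by simp only [hζ]; rw [if_pos (by tauto)]
  have zac : ζ a c = t := by simp only [hζ]; rw [if_pos (by tauto)]
  have zbc : ζ b c = t := by simp only [hζ]; rw [if_pos (by tauto)]
  have zbv : ζ b v = 1 := by simp only [hζ]; rw [if_neg (by tauto), if_neg (by tauto)]
  have zcv : ζ c v = 1 := by simp only [hζ]; rw [if_neg (by tauto), if_neg (by tauto)]
  have zva : ζ v a = 1 := by simp only [hζ]; rw [if_neg (by tauto), if_neg (by tauto)]
  have zvb : ζ v b = 1 := by simp only [hζ]; rw [if_neg (by tauto), if_neg (by tauto)]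
  obtain ⟨V', Γ, φ, H, hH⟩ := hyp ζ hgain
  have hadjA : Γ.lineGraph.Adj (φ v) (φ a) := φ.map_rel_iff.mpr hva
  have hadjB : Γ.lineGraph.Adj (φ v) (φ b) := φ.map_rel_iff.mpr hvb
  have hadjC : Γ.lineGraph.Adj (φ v) (φ c) := φ.map_rel_iff.mpr hvc
  rw [lineGraph_adj_iff_exists] at hadjA hadjB hadjC
  obtain ⟨hneA, wa, hwa_v, hwa⟩ := hadjA
  obtain ⟨hneB, wb, hwb_v, hwb⟩ := hadjB
  obtain ⟨hneC, wc, hwc_v, hwc⟩ := hadjC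
  have hinj : Function.Injective φ := φ.toEquiv.injective
  have hAB : (φ a : Γ.edgeSet) ≠ φ b := fun h => hab (hinj h)
  have hAC : (φ a : Γ.edgeSet) ≠ φ c := fun h => hac (hinj h)
  have hBC : (φ b : Γ.edgeSet) ≠ φ c := fun h => hbc (hinj h)
  obtain ⟨y, hy⟩ := Sym2.mem_iff_exists.mp hwa_v
  -- wb, wc ∈ φ v = s(wa, y)
  have hwb_v' : wb = wa ∨ wb = y := by rw [hy] at hwb_v; exact Sym2.mem_iff.mp hwb_v
  have hwc_v' : wc = wa ∨ wc = y := by rw [hy] at hwc_v; exact Sym2.mem_iff.mp hwc_v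
  -- three symmetric cases
  have final : t = s ∨ t⁻¹ = s := by
    rcases hwb_v' with hb1 | hb1
    · -- wa = wb : common vertex of φ a, φ b, φ v
      subst hb1
      have := triangle_prod hs hsc hH hwa hwb hwa_v hAB (fun h => hneB h.symm) hneA
      simp only [RelIso.symm_apply_apply] at this
      rw [zab, zbv, zva, mul_one, mul_one] at this
      exact Or.inl this
    · rcases hwc_v' with hc1 | hc1
      · -- wa = wc : φ a, φ c, φ v
        subst hc1
        have := triangle_prod hs hsc hH hwa hwc hwa_v hAC (fun h => hneC h.symm) hneA
        simp only [RelIso.symm_apply_apply] at this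
        rw [zac, zcv, zva, mul_one, mul_one] at this
        exact Or.inl this
      · -- wb = wc = y : φ b, φ c, φ v
        have hbceq : wb = wc := by rw [hb1, hc1]
        subst hbceq
        have := triangle_prod hs hsc hH hwb hwc hwb_v hBC (fun h => hneC h.symm) hneB
        simp only [RelIso.symm_apply_apply] at this
        rw [zbc, zcv, zvb, mul_one, mul_one] at this
        exact Or.inl this
  rcases final with h | h
  · exact ht h
  · exact htinv h

lemma classification {VL : Type} [Fintype VL] (L : SimpleGraph VL) (hconn : L.Connected)
    (hE : L.edgeSet.Nonempty) (hdeg : NbrLe2 L) :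
    (∃ n : ℕ, Nonempty (L ≃g pathGraph n)) ∨
      (∃ n : ℕ, 3 ≤ n ∧ Nonempty (L ≃g cycleGraph n)) := by
  classical
  set P : ℕ → Prop := fun n => ∃ l : List VL, l.Nodup ∧ l.Chain' L.Adj ∧ l.length = n with hP
  -- a 2-element chain exists
  obtain ⟨e, he⟩ := hE
  obtain ⟨u, v, huv⟩ : ∃ u v, L.Adj u v := by
    induction e using Sym2.ind with
    | _ u v => exact ⟨u, v, (mem_edgeSet L).mp he⟩
  have hP2 : P 2 := ⟨[u, v], by simp [huv.ne], by simp [List.Chain', List.isChain_cons_cons, huv], rfl⟩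
  have hbound : ∀ n, P n → n ≤ Fintype.card VL := by
    rintro n ⟨l, hnd, _, rfl⟩
    exact hnd.length_le_card
  set N := Nat.findGreatest P (Fintype.card VL) with hN
  have hN2 : 2 ≤ N := Nat.le_findGreatest (hbound 2 hP2) hP2
  obtain ⟨l, hnd, hch, hlen⟩ : P N := Nat.findGreatest_spec (hbound 2 hP2) hP2
  have hmax : ∀ l' : List VL, l'.Nodup → l'.Chain' L.Adj → l'.length ≤ N := by
    intro l' h1 h2
    exact Nat.le_findGreatest (hbound _ ⟨l', h1, h2, rfl⟩) ⟨l', h1, h2, rfl⟩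
  rw [← hlen] at hN2
  -- closure under adjacency
  have hclose : ∀ x y : VL, x ∈ l → L.Adj x y → y ∈ l := by
    intro x y hx hxy
    by_contra hy
    obtain ⟨i, hi⟩ := List.mem_iff_get.mp hx
    rcases Nat.lt_trichotomy 0 i.val with h0 | h0 | h0
    · rcases Nat.lt_trichotomy (i.val) (l.length - 1) with h1 | h1 | h1
      · -- interior
        have hprev : L.Adj (l.get ⟨i.val - 1, by omega⟩) (l.get ⟨i.val, by omega⟩) := by
          have := List.isChain_iff_getElem.mp hch (i.val - 1) (by omega)
          have e : i.val - 1 + 1 = i.val := by omega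
          simp only [List.get_eq_getElem]; simp only [e] at this; exact this
        have hnext : L.Adj (l.get ⟨i.val, by omega⟩) (l.get ⟨i.val + 1, by omega⟩) :=
          List.isChain_iff_getElem.mp hch i.val (by omega)
        have hx1 : L.Adj x (l.get ⟨i.val - 1, by omega⟩) := by
          rw [← hi]; exact hprev.symm
        have hx2 : L.Adj x (l.get ⟨i.val + 1, by omega⟩) := by
          rw [← hi]; exact hnext
        rcases hdeg hx1 hx2 hxy with h | h | h
        · have := List.nodup_iff_injective_get.mp hnd h
          simp only [Fin.mk.injEq] at this
          omega
        · exact hy (h ▸ List.get_mem l _)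
        · exact hy (h ▸ List.get_mem l _)
      · -- last position : extend right
        have : (l ++ [y]).Nodup := by
          rw [List.nodup_append]
          exact ⟨hnd, List.nodup_singleton y, by simpa using fun (a : VL) (ha : a ∈ l) (hay : a = y) => hy (hay ▸ ha)⟩
        have hch' : (l ++ [y]).Chain' L.Adj := by
          change List.IsChain L.Adj (l ++ [y]); rw [List.isChain_append]
          refine ⟨hch, List.isChain_singleton y, ?_⟩
          intro a ha b hb
          simp only [List.head?_cons, Option.mem_def, Option.some.injEq] at hb
          subst hb
          have hlast : l.getLast? = some x := by
            rw [List.getLast?_eq_getElem?, List.getElem?_eq_getElem (by omega)]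
            rw [← hi]
            simp only [List.get_eq_getElem, Option.some.injEq]
            congr 1
            omega
          rw [hlast] at ha
          simp only [Option.mem_def, Option.some.injEq] at ha
          subst ha
          exact hxy
        have := hmax _ this hch'
        simp only [List.length_append, List.length_singleton] at this
        omega
      · omega
    · -- head position : extend left
      have hnd' : (y :: l).Nodup := by simp [hy, hnd]
      have hch' : (y :: l).Chain' L.Adj := by
        change List.IsChain L.Adj (y :: l); rw [List.isChain_cons]
        refine ⟨?_, hch⟩
        intro z hz
        have hx0 : x = l.get ⟨0, by omega⟩ := by
          rw [← hi]; congr 1; exact Fin.ext (by simp only [Fin.val_mk]; omega)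
        have hhead : l.head? = some x := by
          rw [List.head?_eq_getElem?, List.getElem?_eq_getElem (by omega : 0 < l.length), hx0]
          simp
        rw [hhead] at hz
        simp only [Option.mem_def, Option.some.injEq] at hz
        subst hz
        exact hxy.symm
      have := hmax _ hnd' hch'
      simp only [List.length_cons] at this
      omega
    · omega
  -- completeness
  have hlpos : 0 < l.length := by omega
  have hmem : ∀ z : VL, z ∈ l := by
    have hstep : ∀ {x y : VL} (w : L.Walk x y), x ∈ l → y ∈ l := by
      intro x y w
      induction w with
      | nil => exact id
      | cons h p ih => exact fun hx => ih (hclose _ _ hx h)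
    intro z
    exact hstep ((hconn.preconnected (l.get ⟨0, hlpos⟩) z).some) (List.get_mem l _)
  have hinj : ∀ {i j : Fin l.length}, l.get i = l.get j → i = j :=
    fun h => List.nodup_iff_injective_get.mp hnd h
  have hadjstep : ∀ (k : ℕ) (h : k + 1 < l.length),
      L.Adj (l.get ⟨k, by omega⟩) (l.get ⟨k+1, h⟩) := fun k h => by
    have := List.isChain_iff_getElem.mp hch k (by omega)
    exact this
  have getcong : ∀ (a b : ℕ) (ha : a < l.length) (hb : b < l.length), a = b →
      l.get ⟨a, ha⟩ = l.get ⟨b, hb⟩ := by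
    intro a b ha hb h
    subst h
    rfl
  have hsurj : Function.Surjective (fun i : Fin l.length => l.get i) := by
    intro z
    obtain ⟨i, hi⟩ := List.mem_iff_get.mp (hmem z)
    exact ⟨i, hi⟩
  by_cases hcyc : 3 ≤ l.length ∧ L.Adj (l.get ⟨l.length - 1, by omega⟩) (l.get ⟨0, hlpos⟩)
  · -- CYCLE case
    right
    obtain ⟨hn3, hba⟩ := hcyc
    obtain ⟨m, hm⟩ : ∃ m, l.length = m + 3 := ⟨l.length - 3, by omega⟩
    have h1v : ((1 : Fin (m+3)) : ℕ) = 1 := by simp [Fin.val_one]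
    have h2v : ((2 : Fin (m+3)) : ℕ) = 2 := by
      have : (2 : Fin (m+3)) = 1 + 1 := Fin.ext (by simp [Fin.val_add])
      rw [this, Fin.add_def, h1v]
      exact Nat.mod_eq_of_lt (by omega)
    have h2ne : (2 : Fin (m+3)) ≠ 0 := by
      intro h; rw [Fin.ext_iff, h2v] at h; simp at h
    set F : Fin (m+3) → VL := fun i => l.get ⟨i.val, by omega⟩ with hF
    have Finj : Function.Injective F := by
      intro i j h
      have := hinj h
      simp only [Fin.mk.injEq] at this
      exact Fin.ext this
    have Fsurj : Function.Surjective F := by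
      intro z
      obtain ⟨i, hi⟩ := List.mem_iff_get.mp (hmem z)
      exact ⟨⟨i.val, by omega⟩, hi⟩
    have hF1 : ∀ i : Fin (m+3), L.Adj (F i) (F (i+1)) := by
      intro i
      by_cases hi : i.val < m + 2
      · have hv : ((i+1 : Fin (m+3)) : ℕ) = i.val + 1 := by
          rw [Fin.add_def, h1v]
          exact Nat.mod_eq_of_lt (by omega)
        have step := hadjstep i.val (by omega)
        have e1 : F i = l.get ⟨i.val, by omega⟩ := rfl
        have e2 : F (i+1) = l.get ⟨i.val + 1, by omega⟩ := by
          rw [hF]; exact getcong _ _ _ _ hv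
        rw [e1, e2]; exact step
      · have hieq : i.val = m + 2 := by omega
        have hv : ((i+1 : Fin (m+3)) : ℕ) = 0 := by
          rw [Fin.add_def, h1v, hieq]
          simp
        have e1 : F i = l.get ⟨l.length - 1, by omega⟩ := by
          rw [hF]; exact getcong _ _ _ _ (by omega)
        have e2 : F (i+1) = l.get ⟨0, hlpos⟩ := by
          rw [hF]; exact getcong _ _ _ _ (by omega)
        rw [e1, e2]; exact hba
    have hsub1 : ∀ i : Fin (m+3), i - 1 + 1 = i := fun i => by
      rw [sub_add_cancel]
    have key : ∀ i j : Fin (m+3), L.Adj (F i) (F j) → i - j = 1 ∨ j - i = 1 := by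
      intro i j hadj
      by_contra hcon
      push_neg at hcon
      obtain ⟨hij1, hij2⟩ := hcon
      have hprev : L.Adj (F i) (F (i - 1)) := by
        have := hF1 (i - 1)
        rw [hsub1 i] at this
        exact this.symm
      rcases hdeg hprev (hF1 i) hadj with h | h | h
      · have h' := Finj h
        apply h2ne
        have : i + 2 = i + 0 := by
          rw [add_zero]
          calc i + 2 = i + 1 + 1 := by rw [add_assoc, show (2 : Fin (m+3)) = 1 + 1 from Fin.ext (by simp [Fin.val_add])]
          _ = i - 1 + 1 := by rw [← h']
          _ = i := hsub1 i
        exact add_left_cancel this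
      · have h' := Finj h
        apply hij1
        rw [← h', sub_sub_cancel]
      · have h' := Finj h
        apply hij2
        rw [← h', add_sub_cancel_left]
    refine ⟨m + 3, by omega, ⟨⟨(Equiv.ofBijective F ⟨Finj, Fsurj⟩).symm, ?_⟩⟩⟩
    intro x y
    obtain ⟨i, rfl⟩ := Fsurj x
    obtain ⟨j, rfl⟩ := Fsurj y
    have ei : (Equiv.ofBijective F ⟨Finj, Fsurj⟩).symm (F i) = i := by
      apply (Equiv.ofBijective F ⟨Finj, Fsurj⟩).injective
      simp [Equiv.ofBijective_apply]; rfl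
    have ej : (Equiv.ofBijective F ⟨Finj, Fsurj⟩).symm (F j) = j := by
      apply (Equiv.ofBijective F ⟨Finj, Fsurj⟩).injective
      simp [Equiv.ofBijective_apply]; rfl
    rw [ei, ej, cycleGraph_adj']
    constructor
    · rintro (h | h)
      · have huv : i - j = 1 := by rw [Fin.ext_iff, h1v]; exact h
        have hij : i = j + 1 := by rw [← huv]; abel
        rw [hij]; exact (hF1 j).symm
      · have huv : j - i = 1 := by rw [Fin.ext_iff, h1v]; exact h
        have hij : j = i + 1 := by rw [← huv]; abel
        rw [hij]; exact hF1 i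
    · intro h
      rcases key i j h with h' | h'
      · left; rw [h', h1v]
      · right; rw [h', h1v]
  · -- PATH case
    left
    push_neg at hcyc
    have key : ∀ i j : Fin l.length, L.Adj (l.get i) (l.get j) →
        (i.val + 1 = j.val ∨ j.val + 1 = i.val) := by
      have claim : ∀ i j : Fin l.length, i.val < j.val → L.Adj (l.get i) (l.get j) →
          i.val + 1 = j.val := by
        intro i j hij hadj
        by_contra hgap
        have hgap2 : i.val + 2 ≤ j.val := by omega
        rcases Nat.eq_zero_or_pos i.val with h0 | h0
        · -- i = 0
          rcases Nat.lt_or_ge j.val (l.length - 1) with h1 | h1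
          · -- j interior
            have hjprev : L.Adj (l.get j) (l.get ⟨j.val - 1, by omega⟩) := by
              have := hadjstep (j.val - 1) (by omega)
              rw [getcong (j.val - 1 + 1) j.val (by omega) (by omega) (by omega)] at this
              exact this.symm
            have hjnext : L.Adj (l.get j) (l.get ⟨j.val + 1, by omega⟩) :=
              hadjstep j.val (by omega)
            rcases hdeg hjprev hjnext hadj.symm with h | h | h
            · have := hinj h
              simp only [Fin.mk.injEq] at this
              omega
            · have := hinj h
              rw [Fin.ext_iff] at this
              simp only [Fin.val_mk] at this
              omega
            · have := hinj h
              rw [Fin.ext_iff] at this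
              simp only [Fin.val_mk] at this
              omega
          · -- j = length - 1 : contradiction with no-cycle
            have h3 : 3 ≤ l.length := by omega
            apply hcyc h3
            have e1 : l.get ⟨l.length - 1, by omega⟩ = l.get j := getcong _ _ _ _ (by omega)
            have e2 : l.get ⟨0, hlpos⟩ = l.get i := getcong _ _ _ _ (by omega)
            rw [e1, e2]
            exact hadj.symm
        · -- i interior
          have hiprev : L.Adj (l.get i) (l.get ⟨i.val - 1, by omega⟩) := by
            have := hadjstep (i.val - 1) (by omega)
            rw [getcong (i.val - 1 + 1) i.val (by omega) (by omega) (by omega)] at this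
            exact this.symm
          have hinext : L.Adj (l.get i) (l.get ⟨i.val + 1, by omega⟩) :=
            hadjstep i.val (by omega)
          rcases hdeg hiprev hinext hadj with h | h | h
          · have := hinj h
            simp only [Fin.mk.injEq] at this
            omega
          · have := hinj h
            rw [Fin.ext_iff] at this
            simp only [Fin.val_mk] at this
            omega
          · have := hinj h
            rw [Fin.ext_iff] at this
            simp only [Fin.val_mk] at this
            omega
      intro i j hadj
      rcases Nat.lt_trichotomy i.val j.val with h | h | h
      · left; exact claim i j h hadj
      · exfalso
        have : i = j := Fin.ext h
        subst this
        exact L.loopless.irrefl _ hadj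
      · right; exact claim j i h hadj.symm
    set F : Fin l.length → VL := fun i => l.get i with hF
    have Finj : Function.Injective F := fun i j h => hinj h
    refine ⟨l.length, ⟨⟨(Equiv.ofBijective F ⟨Finj, hsurj⟩).symm, ?_⟩⟩⟩
    intro x y
    obtain ⟨i, rfl⟩ := hsurj x
    obtain ⟨j, rfl⟩ := hsurj y
    have ei : (Equiv.ofBijective F ⟨Finj, hsurj⟩).symm (F i) = i := by
      apply (Equiv.ofBijective F ⟨Finj, hsurj⟩).injective
      simp [Equiv.ofBijective_apply]; rfl
    have ej : (Equiv.ofBijective F ⟨Finj, hsurj⟩).symm (F j) = j := by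
      apply (Equiv.ofBijective F ⟨Finj, hsurj⟩).injective
      simp [Equiv.ofBijective_apply]; rfl
    rw [ei, ej, pathGraph_adj]
    constructor
    · rintro (h | h)
      · have := hadjstep i.val (by omega)
        rw [getcong (i.val + 1) j.val (by omega) (by omega) h] at this
        exact this
      · have := hadjstep j.val (by omega)
        rw [getcong (j.val + 1) i.val (by omega) (by omega) h] at this
        exact this.symm
    · exact key i j

/-- **Corollary 3.6.** For a nontrivial group `G`, a connected graph `L` is such that
`(L, ζ)` is a gain-line graph for every gain function `ζ ∈ G(L)` if and only if `L` is
a path or a cycle. -/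
theorem forall_gainLine_iff_path_or_cycle
    {VL G : Type} [Group G] [Nontrivial G] [Fintype VL] (L : SimpleGraph VL)
    (hconn : L.Connected) (hE : L.edgeSet.Nonempty)
    (s : G) (hs : s * s = 1) (hsc : ∀ g : G, s * g = g * s) :
    (∀ ζ : VL → VL → G, IsGainFun L ζ → IsGainLine s L ζ) ↔
      ((∃ n : ℕ, Nonempty (L ≃g SimpleGraph.pathGraph n)) ∨
        ∃ n : ℕ, 3 ≤ n ∧ Nonempty (L ≃g SimpleGraph.cycleGraph n)) := by
  constructor
  · intro hyp
    exact classification L hconn hE (nbrLe2_of_forall_gainLine L s hs hsc hyp)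
  · rintro (⟨n, ⟨φp⟩⟩ | ⟨n, hn3, ⟨φc⟩⟩) ζ hζ
    · exact realize hs hsc L (pathGraph (n+1)) (nbrLe2_path (n+1)) (φp.trans (pathLineIso n)) ζ hζ
    · obtain ⟨m, rfl⟩ : ∃ m, n = m + 3 := ⟨n - 3, by omega⟩
      exact realize hs hsc L (cycleGraph (m+3)) (nbrLe2_cycle (m+1)) (φc.trans (cycleLineIso m)) ζ hζ
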